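/- Let α, β ∈ ℝ³ satisfy |α| = |β| = 1 and α·β = 0. Then e₁×α + e₂×β = 0 if and only if one of the following holds: (α, β) = (e₁, e₂), or (α, β) = (−e₁, −e₂), or α×β = −e₃. Moreover, the pairs with α×β = −e₃ form the circle α = (cos θ, sin θ, 0), β = (sin θ, −cos θ, 0), θ ∈ ℝ. -/

import Mathlib

open Matrix Real

lemma exists_cos_sin (x y : ℝ) (h : x ^ 2 + y ^ 2 = 1) :
    ∃ θ : ℝ, cos θ = x ∧ sin θ = y := by
  have hx1 : -1 ≤ x := by nlinarith [sq_nonneg y]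
  have hx2 : x ≤ 1 := by nlinarith [sq_nonneg y]
  rcases le_or_gt 0 y with hy | hy
  · refine ⟨arccos x, Real.cos_arccos hx1 hx2, ?_⟩
    rw [Real.sin_arccos, show 1 - x ^ 2 = y ^ 2 by linarith, Real.sqrt_sq hy]
  · refine ⟨-arccos x, by rw [Real.cos_neg, Real.cos_arccos hx1 hx2], ?_⟩
    rw [Real.sin_neg, Real.sin_arccos, show 1 - x ^ 2 = y ^ 2 by linarith,
      Real.sqrt_sq_eq_abs, abs_of_neg hy, neg_neg]

/-- For an orthonormal pair `α, β ∈ ℝ³`, the torque `e₁×α + e₂×β`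
vanishes iff `(α, β) = (e₁, e₂)`, or `(α, β) = (−e₁, −e₂)`, or `α×β = −e₃`;
moreover the pairs with `α×β = −e₃` form the circle
`α = (cos θ, sin θ, 0)`, `β = (sin θ, −cos θ, 0)`. -/
theorem zero_torque_characterization
    (α β : Fin 3 → ℝ)
    (hα : α ⬝ᵥ α = 1) (hβ : β ⬝ᵥ β = 1) (hαβ : α ⬝ᵥ β = 0) :
    ((![1, 0, 0] : Fin 3 → ℝ) ⨯₃ α + (![0, 1, 0] : Fin 3 → ℝ) ⨯₃ β = 0
      ↔ (α = ![1, 0, 0] ∧ β = ![0, 1, 0])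
        ∨ (α = ![-1, 0, 0] ∧ β = ![0, -1, 0])
        ∨ α ⨯₃ β = ![0, 0, -1])
    ∧ (α ⨯₃ β = ![0, 0, -1]
      ↔ ∃ θ : ℝ, α = ![cos θ, sin θ, 0] ∧ β = ![sin θ, -cos θ, 0]) := by
  obtain ⟨a1, a2, a3, rfl⟩ : ∃ x y z, α = ![x, y, z] :=
    ⟨α 0, α 1, α 2, by funext i; fin_cases i <;> rfl⟩
  obtain ⟨b1, b2, b3, rfl⟩ : ∃ x y z, β = ![x, y, z] :=
    ⟨β 0, β 1, β 2, by funext i; fin_cases i <;> rfl⟩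
  simp [dotProduct, Fin.sum_univ_three] at hα hβ hαβ
  have eqv : ∀ u v w x y z : ℝ,
      (![u, v, w] : Fin 3 → ℝ) = ![x, y, z] ↔ u = x ∧ v = y ∧ w = z := by
    intro u v w x y z
    constructor
    · intro h
      exact ⟨congrFun h 0, congrFun h 1, congrFun h 2⟩
    · rintro ⟨rfl, rfl, rfl⟩; rfl
  have hz : (0 : Fin 3 → ℝ) = ![0, 0, 0] := by funext i; fin_cases i <;> rfl
  have hcr : (![a1, a2, a3] : Fin 3 → ℝ) ⨯₃ ![b1, b2, b3]
      = ![a2 * b3 - a3 * b2, a3 * b1 - a1 * b3, a1 * b2 - a2 * b1] := by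
    rw [cross_apply]; norm_num; exact ⟨rfl, rfl⟩
  have htq : (![1, 0, 0] : Fin 3 → ℝ) ⨯₃ ![a1, a2, a3]
        + (![0, 1, 0] : Fin 3 → ℝ) ⨯₃ ![b1, b2, b3]
      = ![b3, -a3, a2 - b1] := by
    rw [cross_apply, cross_apply]
    funext i; fin_cases i <;> simp <;> ring
  simp only [htq, hcr, hz, eqv]
  -- key scalar lemma
  have key : (a2 * b3 - a3 * b2 = 0 ∧ a3 * b1 - a1 * b3 = 0 ∧ a1 * b2 - a2 * b1 = -1)
      ↔ a3 = 0 ∧ b3 = 0 ∧ b1 = a2 ∧ b2 = -a1 := by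
    constructor
    · rintro ⟨h0, h1, h2⟩
      have ea3 : a3 = 0 := by linear_combination a1 * h0 + a2 * h1 + a3 * h2
      have eb3 : b3 = 0 := by linear_combination b1 * h0 + b2 * h1 + b3 * h2
      have hsq : (b1 - a2) ^ 2 + (b2 + a1) ^ 2 = 0 := by nlinarith
      have h4 : b1 - a2 = 0 := by nlinarith [sq_nonneg (b1 - a2), sq_nonneg (b2 + a1)]
      have h5 : b2 + a1 = 0 := by nlinarith [sq_nonneg (b1 - a2), sq_nonneg (b2 + a1)]
      exact ⟨ea3, eb3, by linarith, by linarith⟩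
    · rintro ⟨ea3, eb3, eb1, eb2⟩
      rw [ea3, eb3, eb1, eb2]
      refine ⟨by ring, by ring, by nlinarith⟩
  refine ⟨?_, key.trans ?_⟩
  constructor
  · rintro ⟨h0, h1, h2⟩
    have ea3 : a3 = 0 := by linarith
    have eb3 : b3 = 0 := h0
    have eab : a2 = b1 := by linarith
    rcases mul_eq_zero.mp (show a2 * (a1 + b2) = 0 by
        linear_combination hαβ + a1 * eab - b3 * ea3) with h' | h'
    · have hb1' : b1 = 0 := by rw [← eab, h']
      have ha1' : a1 = 1 ∨ a1 = -1 := by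
        rcases mul_eq_zero.mp (show (a1 - 1) * (a1 + 1) = 0 by
            linear_combination hα - a2 * h' - a3 * ea3) with h | h
        · exact Or.inl (by linarith)
        · exact Or.inr (by linarith)
      have hb2' : b2 = 1 ∨ b2 = -1 := by
        rcases mul_eq_zero.mp (show (b2 - 1) * (b2 + 1) = 0 by
            linear_combination hβ - b1 * hb1' - b3 * eb3) with h | h
        · exact Or.inl (by linarith)
        · exact Or.inr (by linarith)
      rcases ha1' with h1' | h1' <;> rcases hb2' with h2' | h2'
      · exact Or.inl ⟨⟨h1', h', ea3⟩, ⟨hb1', h2', eb3⟩⟩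
      · exact Or.inr (Or.inr (key.mpr ⟨ea3, eb3, by rw [hb1', h'], by rw [h2', h1']⟩))
      · exact Or.inr (Or.inr (key.mpr ⟨ea3, eb3, by rw [hb1', h'], by rw [h2', h1']; ring⟩))
      · exact Or.inr (Or.inl ⟨⟨h1', h', ea3⟩, ⟨hb1', h2', eb3⟩⟩)
    · exact Or.inr (Or.inr (key.mpr ⟨ea3, eb3, eab.symm, by linarith⟩))
  · rintro (⟨⟨e1, e2, e3⟩, f1, f2, f3⟩ | ⟨⟨e1, e2, e3⟩, f1, f2, f3⟩ | h)
    · exact ⟨f3, by rw [e3]; ring, by rw [e2, f1]; ring⟩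
    · exact ⟨f3, by rw [e3]; ring, by rw [e2, f1]; ring⟩
    · obtain ⟨e1, e2, e3, e4⟩ := key.mp h
      exact ⟨e2, by rw [e1]; ring, by rw [e3]; ring⟩
  -- circle characterization
  constructor
  · rintro ⟨ea3, eb3, eb1, eb2⟩
    obtain ⟨θ, hc, hs⟩ := exists_cos_sin a1 a2 (by nlinarith)
    exact ⟨θ, ⟨hc.symm, hs.symm, ea3⟩, by rw [eb1, eb2, hc, hs]; exact ⟨rfl, rfl, eb3⟩⟩
  · rintro ⟨θ, ⟨e1, e2, e3⟩, f1, f2, f3⟩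
    exact ⟨e3, f3, by rw [f1, e2], by rw [f2, e1]⟩
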